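/- arXiv:2012.02261 — 2 statements merged into one kernel-verified Lean document; each statement's English description precedes it below -/
import Mathlib

section
/- Let Ω ⊂ ℝ^N be a bounded domain (with Lebesgue measure) and let w ∈ L¹(Ω) be measurable. Suppose there exist α > 1 and A > 0 such that for every k > 0, ∫_Ω |S_k(w)| dx ≤ A · |{x ∈ Ω : |w(x)| > k}|^α, where |·| denotes Lebesgue measure. Then w ∈ L^∞(Ω) and there exists a constant c > 0 depending only on α such that ‖w‖_{L^∞(Ω)} ≤ c · A^{1/α} · ‖w‖_{L¹(Ω)}^{1−1/α}. -/
set_option maxHeartbeats 1000000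


open Real MeasureTheory

/-- The truncation `S_k : ℝ → ℝ`:
`S_k(t) = t + k` if `t < -k`, `S_k(t) = 0` if `-k ≤ t ≤ k`, `S_k(t) = t - k` if `t > k`. -/
noncomputable def Sk (k t : ℝ) : ℝ :=
  if t < -k then t + k else if t ≤ k then 0 else t - k

open Filter in
private lemma iter_lemma {φ : ℝ → ℝ} {A α k₀ : ℝ} (hα : 1 < α) (hA : 0 < A) (hk₀ : 0 < k₀)
    (hmono : ∀ a b, k₀ ≤ a → a ≤ b → φ b ≤ φ a) (hnn : ∀ x, 0 ≤ φ x)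
    (key : ∀ k h, k₀ ≤ k → k < h → φ h ≤ A * φ k ^ α / (h - k)) :
    φ (k₀ + 2 ^ (α/(α-1)) * A * φ k₀ ^ (α-1)) = 0 := by
  have hα1 : (0:ℝ) < α - 1 := by linarith
  rcases eq_or_lt_of_le (hnn k₀) with h0 | hPpos
  · rw [← h0, Real.zero_rpow (ne_of_gt hα1)]
    simp [← h0]
  set P := φ k₀ with hPdef
  set d := 2 ^ (α/(α-1)) * A * P ^ (α-1) with hddef
  have hd : 0 < d :=
    mul_pos (mul_pos (Real.rpow_pos_of_pos two_pos _) hA) (Real.rpow_pos_of_pos hPpos _)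
  have hexp : ∀ n : ℕ, (0:ℝ) ≤ 1 - 2 ^ (-(n:ℝ)) := by
    intro n
    have h2le : (2:ℝ) ^ (-(n:ℝ)) ≤ 1 :=
      Real.rpow_le_one_of_one_le_of_nonpos (by norm_num) (neg_nonpos.mpr (Nat.cast_nonneg n))
    linarith
  have hk₀le : ∀ n : ℕ, k₀ ≤ k₀ + d * (1 - 2 ^ (-(n:ℝ))) := by
    intro n; nlinarith [hexp n, hd.le]
  have claim : ∀ n : ℕ, φ (k₀ + d * (1 - 2 ^ (-(n:ℝ)))) ≤ P * 2 ^ (-(n:ℝ)/(α-1)) := by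
    intro n
    induction n with
    | zero => simp [hPdef]
    | succ n ih =>
      push_cast
      have hstep : (2:ℝ) ^ (-((n:ℝ)+1)) < 2 ^ (-(n:ℝ)) := by
        apply Real.rpow_lt_rpow_left_iff (x := 2) (by norm_num) |>.mpr
        linarith
      have hlt : k₀ + d * (1 - 2 ^ (-(n:ℝ))) < k₀ + d * (1 - 2 ^ (-((n:ℝ)+1))) := by
        nlinarith [mul_lt_mul_of_pos_left hstep hd]
      have hkey := key _ _ (hk₀le n) hlt
      have hdiff : (2:ℝ) ^ (-(n:ℝ)) - 2 ^ (-((n:ℝ)+1)) = 2 ^ (-((n:ℝ)+1)) := by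
        have : (2:ℝ) ^ (-(n:ℝ)) = 2 ^ (-((n:ℝ)+1)) * 2 := by
          rw [← Real.rpow_add_one (by norm_num)]
          ring_nf
        linarith
      have hsub : (k₀ + d * (1 - 2 ^ (-((n:ℝ)+1)))) - (k₀ + d * (1 - 2 ^ (-(n:ℝ)))) =
          d * 2 ^ (-((n:ℝ)+1)) := by nlinarith [hdiff]
      have hmonon : φ (k₀ + d * (1 - 2 ^ (-(n:ℝ)))) ^ α ≤ (P * 2 ^ (-(n:ℝ)/(α-1))) ^ α :=
        Real.rpow_le_rpow (hnn _) ih (by linarith)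
      have hden : (0:ℝ) < d * 2 ^ (-((n:ℝ)+1)) :=
        mul_pos hd (Real.rpow_pos_of_pos two_pos _)
      have hchain : φ (k₀ + d * (1 - 2 ^ (-((n:ℝ)+1)))) ≤
          A * (P * 2 ^ (-(n:ℝ)/(α-1))) ^ α / (d * 2 ^ (-((n:ℝ)+1))) := by
        rw [hsub] at hkey
        refine hkey.trans ?_
        exact div_le_div_of_nonneg_right (mul_le_mul_of_nonneg_left hmonon hA.le) hden.le
      have hcalc : A * (P * 2 ^ (-(n:ℝ)/(α-1))) ^ α / (d * 2 ^ (-((n:ℝ)+1))) =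
          P * 2 ^ (-((n:ℝ)+1)/(α-1)) := by
        have eP : P * P ^ (α-1) = P ^ α := by
          rw [Real.rpow_sub hPpos, Real.rpow_one]; field_simp
        have h2 : (2:ℝ) ^ (-(n:ℝ)/(α-1) * α) =
            2 ^ (-((n:ℝ)+1)/(α-1)) * 2 ^ (α/(α-1)) * 2 ^ (-((n:ℝ)+1)) := by
          rw [← Real.rpow_add two_pos, ← Real.rpow_add two_pos]
          congr 1; field_simp; ring
        rw [div_eq_iff (ne_of_gt hden), Real.mul_rpow hPpos.le (by positivity),
          ← Real.rpow_mul (by norm_num : (0:ℝ) ≤ 2), ← eP, h2, hddef]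
        ring
      exact hchain.trans (le_of_eq hcalc)
  have hlim : Tendsto (fun n:ℕ => P * 2 ^ (-(n:ℝ)/(α-1))) atTop (nhds 0) := by
    have hr1 : (2:ℝ) ^ (-(α-1)⁻¹) < 1 :=
      Real.rpow_lt_one_of_one_lt_of_neg (by norm_num) (neg_lt_zero.mpr (inv_pos.mpr hα1))
    have hr0 : (0:ℝ) ≤ 2 ^ (-(α-1)⁻¹) := (Real.rpow_pos_of_pos two_pos _).le
    have h := (tendsto_pow_atTop_nhds_zero_of_lt_one hr0 hr1).const_mul P
    rw [mul_zero] at h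
    refine h.congr fun n => ?_
    congr 1
    rw [← Real.rpow_natCast ((2:ℝ) ^ (-(α-1)⁻¹)) n, ← Real.rpow_mul (by norm_num)]
    congr 1
    field_simp
  have hle : φ (k₀ + d) ≤ 0 := by
    apply ge_of_tendsto hlim
    filter_upwards with n
    calc φ (k₀ + d) ≤ φ (k₀ + d * (1 - 2 ^ (-(n:ℝ)))) := by
          apply hmono _ _ (hk₀le n)
          nlinarith [Real.rpow_pos_of_pos two_pos (-(n:ℝ))]
      _ ≤ _ := claim n
  linarith [hnn (k₀ + d)]

/-- If `w ∈ L¹(Ω)` on a bounded domain `Ω ⊂ ℝ^N` satisfies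
`∫_Ω |S_k(w)| dx ≤ A |{|w| > k}|^α` for all `k > 0` with `α > 1`, `A > 0`, then
`w ∈ L^∞(Ω)` with `‖w‖_{L^∞(Ω)} ≤ c A^{1/α} ‖w‖_{L¹(Ω)}^{1-1/α}`, where `c > 0`
depends only on `α`. -/
theorem Linfty_bound_from_truncation_decay (α : ℝ) (hα : 1 < α) :
    ∃ c : ℝ, 0 < c ∧
      ∀ (N : ℕ) (Ω : Set (EuclideanSpace ℝ (Fin N))) (w : EuclideanSpace ℝ (Fin N) → ℝ)
        (A : ℝ),
        IsOpen Ω → IsConnected Ω → Bornology.IsBounded Ω →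
        Integrable w (volume.restrict Ω) →
        0 < A →
        (∀ k : ℝ, 0 < k →
          (∫ x in Ω, |Sk k (w x)|) ≤
            A * (volume {x ∈ Ω | k < |w x|}).toReal ^ α) →
        MemLp w ⊤ (volume.restrict Ω) ∧
          eLpNorm w ⊤ (volume.restrict Ω) ≤
            ENNReal.ofReal (c * A ^ (1 / α) * (∫ x in Ω, |w x|) ^ (1 - 1 / α)) := by
  have hα1 : (0:ℝ) < α - 1 := by linarith
  refine ⟨1 + 2 ^ (α/(α-1)), by positivity, ?_⟩
  intro N Ω w A hΩopen hΩconn hΩbdd hInt hA hkey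
  have hΩm : MeasurableSet Ω := hΩopen.measurableSet
  have hΩfin : volume Ω < ⊤ := hΩbdd.measure_lt_top
  -- measurable representative
  obtain ⟨g, hgsm, hwg⟩ : ∃ g : EuclideanSpace ℝ (Fin N) → ℝ,
      StronglyMeasurable g ∧ w =ᵐ[volume.restrict Ω] g :=
    ⟨hInt.1.mk w, hInt.1.stronglyMeasurable_mk, hInt.1.ae_eq_mk⟩
  have hgm : Measurable g := hgsm.measurable
  have hgInt : Integrable g (volume.restrict Ω) := hInt.congr hwg
  set I := ∫ x in Ω, |w x| with hIdef
  have hIg : I = ∫ x in Ω, |g x| := integral_congr_ae (hwg.mono fun x hx => by simp only [hx])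
  have hI0 : 0 ≤ I := integral_nonneg fun x => abs_nonneg _
  set φ : ℝ → ℝ := fun k => (volume {x ∈ Ω | k < |g x|}).toReal with hφdef
  have hsets : ∀ k : ℝ, {x ∈ Ω | k < |g x|} = Ω ∩ {x | k < |g x|} := fun k => rfl
  have hSm : ∀ k : ℝ, MeasurableSet {x ∈ Ω | k < |g x|} := fun k => by
    rw [hsets]; exact hΩm.inter (measurableSet_lt measurable_const hgm.abs)
  have hSfin : ∀ k : ℝ, volume {x ∈ Ω | k < |g x|} < ⊤ := fun k =>
    lt_of_le_of_lt (measure_mono fun x hx => hx.1) hΩfin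
  have hφmono : ∀ a b : ℝ, a ≤ b → φ b ≤ φ a := by
    intro a b hab
    exact ENNReal.toReal_mono (hSfin a).ne
      (measure_mono fun x hx => ⟨hx.1, lt_of_le_of_lt hab hx.2⟩)
  have hφnn : ∀ k : ℝ, 0 ≤ φ k := fun k => ENNReal.toReal_nonneg
  -- volume of w-sets equals volume of g-sets
  have hwgnull : volume ({x | w x ≠ g x} ∩ Ω) = 0 := by
    have := hwg
    rw [Filter.EventuallyEq, ae_iff, Measure.restrict_apply' hΩm] at this
    exact this
  have hsetseq : ∀ k : ℝ, volume {x ∈ Ω | k < |w x|} = volume {x ∈ Ω | k < |g x|} := by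
    intro k
    apply measure_congr
    rw [Filter.eventuallyEq_set]
    have h0 : ∀ᵐ x : EuclideanSpace ℝ (Fin N), x ∉ {x | w x ≠ g x} ∩ Ω := by
      rw [ae_iff]; simpa using (show volume {a | ¬w a = g a ∧ a ∈ Ω} = 0 from hwgnull)
    filter_upwards [h0] with x hx
    simp only [Set.mem_inter_iff, Set.mem_setOf_eq, not_and] at hx
    constructor
    · rintro ⟨hxΩ, hk⟩
      refine ⟨hxΩ, ?_⟩
      by_cases hwgx : w x = g x
      · rwa [← hwgx]
      · exact absurd hxΩ (hx hwgx)
    · rintro ⟨hxΩ, hk⟩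
      refine ⟨hxΩ, ?_⟩
      by_cases hwgx : w x = g x
      · rwa [hwgx]
      · exact absurd hxΩ (hx hwgx)
  -- Chebyshev
  have cheb : ∀ k : ℝ, 0 < k → k * φ k ≤ I := by
    intro k hk
    rw [hIg]
    have hgabs : IntegrableOn (fun x => |g x|) Ω volume := hgInt.abs
    calc k * φ k ≤ ∫ x in {x ∈ Ω | k < |g x|}, |g x| := by
          apply setIntegral_ge_of_const_le_real (hSm k) (hSfin k).ne
            (fun x hx => le_of_lt hx.2)
          exact hgabs.mono_set fun x hx => hx.1
      _ ≤ ∫ x in Ω, |g x| := by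
          apply setIntegral_mono_set hgabs (ae_of_all _ fun x => abs_nonneg _)
          exact HasSubset.Subset.eventuallyLE fun x hx => hx.1
  -- key inequality for φ
  have hSkint : ∀ k : ℝ, 0 ≤ k → Integrable (fun x => |Sk k (g x)|) (volume.restrict Ω) := by
    intro k hk
    have hSkm : Measurable (Sk k) := by
      unfold Sk
      refine Measurable.ite (measurableSet_lt measurable_id measurable_const) ?_ ?_
      · exact measurable_id.add_const k
      · exact Measurable.ite (measurableSet_le measurable_id measurable_const)
          measurable_const (measurable_id.sub_const k)
    refine (hgInt.abs.mono ((hSkm.comp hgm).abs.aestronglyMeasurable) ?_)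
    filter_upwards with x
    simp only [Real.norm_eq_abs, abs_abs]
    unfold Sk
    split_ifs with h1 h2
    · rw [abs_of_nonpos (by linarith), abs_of_neg (by linarith)]; linarith
    · simp [abs_nonneg]
    · push_neg at h1 h2
      rw [abs_of_pos (by linarith), abs_of_pos (by linarith)]; linarith
  have hSkcong : ∀ k : ℝ, (∫ x in Ω, |Sk k (w x)|) = ∫ x in Ω, |Sk k (g x)| := by
    intro k
    exact integral_congr_ae (hwg.mono fun x hx => by simp only [hx])
  have keyφ : ∀ k h : ℝ, 0 < k → k < h → φ h ≤ A * φ k ^ α / (h - k) := by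
    intro k h hk hkh
    rw [le_div_iff₀ (by linarith)]
    have hlow : φ h * (h - k) ≤ ∫ x in Ω, |Sk k (g x)| := by
      have hSkabs : IntegrableOn (fun x => |Sk k (g x)|) Ω volume := hSkint k hk.le
      calc φ h * (h - k) = (h - k) * φ h := by ring
        _ ≤ ∫ x in {x ∈ Ω | h < |g x|}, |Sk k (g x)| := by
            apply setIntegral_ge_of_const_le_real (hSm h) (hSfin h).ne ?_
              (hSkabs.mono_set fun x hx => hx.1)
            intro x hx
            have hgx : h < |g x| := hx.2
            unfold Sk
            split_ifs with h1 h2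
            · have habs : |g x| = -g x := abs_of_neg (by linarith)
              rw [habs] at hgx
              rw [abs_of_nonpos (by linarith)]
              linarith
            · exfalso
              push_neg at h1
              have : |g x| ≤ k := abs_le.mpr ⟨by linarith, h2⟩
              linarith
            · push_neg at h1 h2
              have habs : |g x| = g x := abs_of_pos (by linarith)
              rw [habs] at hgx
              rw [abs_of_pos (by linarith)]
              linarith
        _ ≤ ∫ x in Ω, |Sk k (g x)| := by
            apply setIntegral_mono_set hSkabs
              (ae_of_all _ fun x => abs_nonneg _)
            exact HasSubset.Subset.eventuallyLE fun x hx => hx.1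
    calc φ h * (h - k) ≤ ∫ x in Ω, |Sk k (g x)| := hlow
      _ = ∫ x in Ω, |Sk k (w x)| := (hSkcong k).symm
      _ ≤ A * (volume {x ∈ Ω | k < |w x|}).toReal ^ α := hkey k hk
      _ = A * φ k ^ α := by rw [hsetseq k]
  -- conclude
  rcases eq_or_lt_of_le hI0 with hI0' | hIpos
  · -- I = 0 : w = 0 a.e.
    have hint0 : (∫ x in Ω, |w x|) = 0 := by rw [← hIdef]; exact hI0'.symm
    have hw0 : (fun x => |w x|) =ᵐ[volume.restrict Ω] 0 :=
      (integral_eq_zero_iff_of_nonneg (fun x => abs_nonneg _) hInt.abs).mp hint0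
    have hw0' : w =ᵐ[volume.restrict Ω] 0 := hw0.mono fun x hx => by simpa using hx
    constructor
    · exact memLp_top_of_bound hInt.aestronglyMeasurable 0
        (hw0'.mono fun x hx => by simp [hx])
    · rw [eLpNorm_congr_ae hw0', eLpNorm_zero]
      exact bot_le
  · set k₀ := A ^ (1/α) * I ^ (1 - 1/α) with hk₀def
    have hk₀pos : 0 < k₀ := mul_pos (Real.rpow_pos_of_pos hA _) (Real.rpow_pos_of_pos hIpos _)
    have hiter : φ (k₀ + 2 ^ (α/(α-1)) * A * φ k₀ ^ (α-1)) = 0 :=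
      iter_lemma hα hA hk₀pos (fun a b _ hab => hφmono a b hab) hφnn
        (fun k h hk hkh => keyφ k h (lt_of_lt_of_le hk₀pos hk) hkh)
    set B := k₀ + 2 ^ (α/(α-1)) * A * φ k₀ ^ (α-1) with hBdef
    -- bound on B
    have hφk₀ : φ k₀ ≤ I / k₀ := by
      rw [le_div_iff₀ hk₀pos]
      have := cheb k₀ hk₀pos
      nlinarith
    have hmul : k₀ * (A ^ (-(1/α)) * I ^ (1/α)) = I := by
      rw [hk₀def]
      rw [show A ^ (1/α) * I ^ (1-1/α) * (A ^ (-(1/α)) * I ^ (1/α)) =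
          (A ^ (1/α) * A ^ (-(1/α))) * (I ^ (1-1/α) * I ^ (1/α)) from by ring,
        ← Real.rpow_add hA, ← Real.rpow_add hIpos]
      have e1 : 1/α + -(1/α) = 0 := by ring
      have e2 : (1-1/α) + 1/α = 1 := by ring
      rw [e1, e2, Real.rpow_zero, Real.rpow_one, one_mul]
    have hIk : I / k₀ = A ^ (-(1/α)) * I ^ (1/α) := by
      rw [div_eq_iff (ne_of_gt hk₀pos)]
      nlinarith
    have h2 : A * (I / k₀) ^ (α-1) = A ^ (1/α) * I ^ (1-1/α) := by
      rw [hIk, Real.mul_rpow (by positivity) (by positivity),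
        ← Real.rpow_mul hA.le, ← Real.rpow_mul hIpos.le]
      have hA2 : A * A ^ (-(1/α)*(α-1)) = A ^ (1/α) := by
        nth_rewrite 1 [← Real.rpow_one A]
        rw [← Real.rpow_add hA]
        congr 1
        field_simp; ring
      have hI2 : (1/α)*(α-1) = 1 - 1/α := by
        field_simp
      rw [hI2, ← mul_assoc, hA2]
    have hd_le : 2 ^ (α/(α-1)) * A * φ k₀ ^ (α-1) ≤ 2 ^ (α/(α-1)) * k₀ := by
      have h1 : φ k₀ ^ (α-1) ≤ (I / k₀) ^ (α-1) :=
        Real.rpow_le_rpow (hφnn _) hφk₀ (by linarith)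
      calc 2 ^ (α/(α-1)) * A * φ k₀ ^ (α-1)
          ≤ 2 ^ (α/(α-1)) * A * (I / k₀) ^ (α-1) := by
            apply mul_le_mul_of_nonneg_left h1
            positivity
        _ = 2 ^ (α/(α-1)) * (A * (I / k₀) ^ (α-1)) := by ring
        _ = 2 ^ (α/(α-1)) * k₀ := by rw [h2, ← hk₀def]
    have hBle : B ≤ (1 + 2 ^ (α/(α-1))) * A ^ (1/α) * I ^ (1-1/α) := by
      have hrhs : (1 + 2 ^ (α/(α-1))) * A ^ (1/α) * I ^ (1-1/α) =
          k₀ + 2 ^ (α/(α-1)) * k₀ := by rw [hk₀def]; ring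
      rw [hBdef, hrhs]
      linarith
    -- measure zero level set
    have hB0 : volume {x ∈ Ω | B < |g x|} = 0 := by
      rcases (ENNReal.toReal_eq_zero_iff _).mp hiter with h | h
      · exact h
      · exact absurd h (hSfin B).ne
    have haeg : ∀ᵐ x ∂(volume.restrict Ω), ‖w x‖ ≤ B := by
      have h1 : (volume.restrict Ω) {x | B < |g x|} = 0 := by
        rw [Measure.restrict_apply' hΩm]
        refine measure_mono_null ?_ hB0
        intro x hx
        exact ⟨hx.2, hx.1⟩
      have h2' : ∀ᵐ x ∂(volume.restrict Ω), ¬ (B < |g x|) := by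
        rw [ae_iff]
        simpa using h1
      filter_upwards [h2', hwg] with x hx hx2
      rw [Real.norm_eq_abs, hx2]
      exact not_lt.mp hx
    refine ⟨memLp_top_of_bound hInt.aestronglyMeasurable B haeg, ?_⟩
    rw [eLpNorm_exponent_top]
    exact (eLpNormEssSup_le_of_ae_bound haeg).trans (ENNReal.ofReal_le_ofReal hBle)
end

section
/- Let N ≥ 3 be an integer, μ_0 = −(N−2)²/4, μ > (3/4)μ_0, and τ_+ = −(N−2)/2 + √(μ−μ_0). Then for every smooth compactly supported function u ∈ C_c^∞(ℝ^N), ∫_{ℝ^N} ( |∇u(x)|² − 2τ_+ ‖x‖^{−2} (x·∇u(x)) u(x) ) dx ≥ min{1, 1 + 4τ_+/(N−2)} · ∫_{ℝ^N} |∇u(x)|² dx, and the coercivity constant min{1, 1 + 4τ_+/(N−2)} is strictly positive. -/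
open Real MeasureTheory
open scoped ENNReal

noncomputable section

namespace DualHardyAux

open Set Metric Filter MeasureTheory.Measure InnerProductSpace

variable {N : ℕ}

abbrev Esp (N : ℕ) := EuclideanSpace ℝ (Fin N)

lemma rpow_neg_two_eq {y : ℝ} (hy : 0 ≤ y) : y ^ (-2 : ℝ) = (y ^ 2)⁻¹ := by
  rw [show (-2:ℝ) = -((2:ℕ):ℝ) by norm_num, Real.rpow_neg hy, Real.rpow_natCast]

lemma nontrivial_esp (hN : 1 ≤ N) : Nontrivial (Esp N) := by
  have h : 0 < Module.finrank ℝ (Esp N) := by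
    rw [finrank_euclideanSpace_fin]; omega
  exact Module.nontrivial_of_finrank_pos h

lemma mp (hN : 1 ≤ N) :
    MeasurePreserving (homeomorphUnitSphereProd (Esp N))
      ((volume : Measure (Esp N)).comap Subtype.val)
      ((volume : Measure (Esp N)).toSphere.prod (volumeIoiPow (N - 1))) := by
  haveI := nontrivial_esp hN
  have h := (volume : Measure (Esp N)).measurePreserving_homeomorphUnitSphereProd
  rwa [finrank_euclideanSpace_fin] at h

lemma comp_eq (f : Esp N → ℝ) (x : ({(0:Esp N)}ᶜ : Set (Esp N))) :
    f (((homeomorphUnitSphereProd (Esp N) x).2 : ℝ) •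
        ((homeomorphUnitSphereProd (Esp N) x).1 : Esp N)) = f x.1 := by
  have hx : (x : Esp N) ≠ 0 := x.2
  rw [homeomorphUnitSphereProd_apply_snd_coe, homeomorphUnitSphereProd_apply_fst_coe,
    smul_smul, mul_inv_cancel₀ (norm_ne_zero_iff.2 hx), one_smul]

lemma transfer_integrable (hN : 1 ≤ N) (f : Esp N → ℝ) :
    Integrable f (volume : Measure (Esp N)) ↔
      Integrable (fun p : sphere (0:Esp N) 1 × Ioi (0:ℝ) => f ((p.2 : ℝ) • (p.1 : Esp N)))
        ((volume : Measure (Esp N)).toSphere.prod (volumeIoiPow (N-1))) := by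
  haveI := nontrivial_esp hN
  rw [← (mp hN).integrable_comp_emb (Homeomorph.measurableEmbedding _)]
  have h1 : ((fun p : sphere (0:Esp N) 1 × Ioi (0:ℝ) => f ((p.2:ℝ) • (p.1:Esp N))) ∘
      (homeomorphUnitSphereProd (Esp N))) = (f ∘ Subtype.val) :=
    funext fun x => comp_eq f x
  rw [h1, ← (MeasurableEmbedding.subtype_coe
      (measurableSet_singleton (0:Esp N)).compl).integrable_map_iff,
    map_comap_subtype_coe (measurableSet_singleton _).compl, restrict_compl_singleton]

lemma transfer_integral (hN : 1 ≤ N) (f : Esp N → ℝ) :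
    ∫ x, f x = ∫ p : sphere (0:Esp N) 1 × Ioi (0:ℝ), f ((p.2 : ℝ) • (p.1 : Esp N))
        ∂((volume : Measure (Esp N)).toSphere.prod (volumeIoiPow (N-1))) := by
  haveI := nontrivial_esp hN
  rw [← (mp hN).integral_comp (Homeomorph.measurableEmbedding _)]
  have h1 : ∀ x : ({(0:Esp N)}ᶜ : Set (Esp N)),
      f (((homeomorphUnitSphereProd (Esp N) x).2 : ℝ) •
        ((homeomorphUnitSphereProd (Esp N) x).1 : Esp N)) = f x.1 := comp_eq f
  calc ∫ x, f x = ∫ x : ({(0:Esp N)}ᶜ : Set (Esp N)), f x.1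
      ∂((volume : Measure (Esp N)).comap Subtype.val) := by
        rw [integral_subtype_comap (measurableSet_singleton _).compl, restrict_compl_singleton]
    _ = _ := (integral_congr_ae (ae_of_all _ fun x => (h1 x).symm))

lemma volumeIoiPow_integral (n : ℕ) (h : ℝ → ℝ) :
    ∫ r : Ioi (0:ℝ), h r ∂(volumeIoiPow n) = ∫ r in Ioi (0:ℝ), r ^ n * h r := by
  simp only [Measure.volumeIoiPow, ENNReal.ofReal]
  rw [integral_withDensity_eq_integral_smul
      ((measurable_subtype_coe.pow_const _).real_toNNReal),
    integral_subtype_comap measurableSet_Ioi (fun a => (a ^ n).toNNReal • h a)]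
  refine setIntegral_congr_fun measurableSet_Ioi fun x hx => ?_
  rw [NNReal.smul_def, Real.coe_toNNReal _ (pow_nonneg hx.out.le _), smul_eq_mul]

end DualHardyAux

namespace DualHardyAux2
open Set Metric Filter MeasureTheory.Measure InnerProductSpace DualHardyAux

lemma integrable_master {N : ℕ} (hN : 3 ≤ N) {f : Esp N → ℝ} (hmeas : Measurable f)
    {C R : ℝ} (hC : 0 ≤ C) (hR : 0 < R)
    (hfR : ∀ x : Esp N, R ≤ ‖x‖ → f x = 0)
    (hfb : ∀ x : Esp N, x ≠ 0 → |f x| ≤ C * ‖x‖ ^ (-2:ℝ)) :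
    Integrable f (volume : Measure (Esp N)) := by
  haveI := nontrivial_esp (N := N) (by omega)
  have hmp := mp (N := N) (by omega)
  refine ⟨hmeas.aestronglyMeasurable, ?_⟩
  rw [hasFiniteIntegral_def]; simp only [enorm_eq_nnnorm]
  have hsm : Measurable fun p : sphere (0:Esp N) 1 × Ioi (0:ℝ) => (p.2:ℝ) • (p.1:Esp N) :=
    ((continuous_subtype_val.comp continuous_snd).smul
      (continuous_subtype_val.comp continuous_fst)).measurable
  set ν := ((volume : Measure (Esp N)).toSphere.prod (volumeIoiPow (N-1))) with hν
  have key : ∫⁻ a, ‖f a‖₊ ∂(volume : Measure (Esp N)) =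
      ∫⁻ p : sphere (0:Esp N) 1 × Ioi (0:ℝ), ‖f ((p.2:ℝ) • (p.1:Esp N))‖₊ ∂ν := by
    calc ∫⁻ a, ‖f a‖₊ ∂(volume : Measure (Esp N))
        = ∫⁻ a in {(0:Esp N)}ᶜ, ‖f a‖₊ ∂(volume : Measure (Esp N)) := by
          rw [restrict_compl_singleton]
      _ = ∫⁻ x : ({(0:Esp N)}ᶜ : Set (Esp N)), ‖f x.1‖₊
            ∂((volume : Measure (Esp N)).comap Subtype.val) :=
          (lintegral_subtype_comap (measurableSet_singleton _).compl _).symm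
      _ = _ := by
          rw [← hmp.lintegral_comp_emb (Homeomorph.measurableEmbedding _)]
          exact lintegral_congr fun x => by rw [comp_eq f x]
  rw [key, hν, lintegral_prod (fun p : sphere (0:Esp N) 1 × Ioi (0:ℝ) => (‖f ((p.2:ℝ) • (p.1:Esp N))‖₊ : ℝ≥0∞)) ((hmeas.comp hsm).enorm.aemeasurable)]
  set D := ENNReal.ofReal (C * max R 1 ^ (N-3)) with hD
  have inner_le : ∀ ω : sphere (0:Esp N) 1,
      ∫⁻ r : Ioi (0:ℝ), ‖f ((r:ℝ) • (ω:Esp N))‖₊ ∂(volumeIoiPow (N-1))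
        ≤ D * ENNReal.ofReal R := by
    intro ω
    have hω : ‖(ω:Esp N)‖ = 1 := mem_sphere_zero_iff_norm.1 ω.2
    have hωne : (ω:Esp N) ≠ 0 := fun h => by simp [h] at hω
    have hmg : Measurable fun r : Ioi (0:ℝ) => (‖f ((r:ℝ) • (ω:Esp N))‖₊ : ℝ≥0∞) :=
      (hmeas.comp (continuous_subtype_val.smul continuous_const).measurable).enorm
    rw [Measure.volumeIoiPow, lintegral_withDensity_eq_lintegral_mul _
      ((measurable_subtype_coe.pow_const _).ennreal_ofReal) hmg]
    have hptwise : ∀ r : Ioi (0:ℝ),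
        ((fun r : Ioi (0:ℝ) => ENNReal.ofReal ((r:ℝ) ^ (N-1))) *
          fun r : Ioi (0:ℝ) => (‖f ((r:ℝ) • (ω:Esp N))‖₊ : ℝ≥0∞)) r ≤
          Set.indicator {r : Ioi (0:ℝ) | (r:ℝ) < R} (fun _ => D) r := by
      intro r
      have hr0 : (0:ℝ) < r := r.2
      have hnorm : ‖(r:ℝ) • (ω:Esp N)‖ = (r:ℝ) := by
        rw [norm_smul, hω, mul_one, Real.norm_eq_abs, abs_of_pos hr0]
      rcases le_or_gt R r with h | h
      · have : f ((r:ℝ) • (ω:Esp N)) = 0 := hfR _ (by rw [hnorm]; exact h)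
        simp [this, Set.indicator]
      · have hrS : r ∈ {r : Ioi (0:ℝ) | (r:ℝ) < R} := h
        rw [Set.indicator_of_mem hrS]
        simp only [Pi.mul_apply]
        have habs : (‖f ((r:ℝ) • (ω:Esp N))‖₊ : ℝ≥0∞)
            = ENNReal.ofReal |f ((r:ℝ) • (ω:Esp N))| := by
          rw [← enorm_eq_nnnorm, Real.enorm_eq_ofReal_abs]
        rw [habs, ← ENNReal.ofReal_mul (by positivity)]
        refine ENNReal.ofReal_le_ofReal ?_
        have hne : (r:ℝ) • (ω:Esp N) ≠ 0 := smul_ne_zero hr0.ne' hωne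
        have hb := hfb _ hne
        rw [hnorm] at hb
        calc (r:ℝ)^(N-1) * |f ((r:ℝ) • (ω:Esp N))|
            ≤ (r:ℝ)^(N-1) * (C * (r:ℝ) ^ (-2:ℝ)) := by
              exact mul_le_mul_of_nonneg_left hb (by positivity)
          _ = C * ((r:ℝ)^(N-3) * ((r:ℝ)^2 * ((r:ℝ)^2)⁻¹)) := by
              rw [rpow_neg_two_eq hr0.le]
              rw [show N - 1 = N - 3 + 2 by omega, pow_add]
              ring
          _ = C * (r:ℝ)^(N-3) := by
              rw [mul_inv_cancel₀ (by positivity), mul_one]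
          _ ≤ C * max R 1 ^ (N-3) := by
              refine mul_le_mul_of_nonneg_left ?_ hC
              exact pow_le_pow_left₀ hr0.le (le_max_of_le_left h.le) _
    calc ∫⁻ r : Ioi (0:ℝ), ((fun r : Ioi (0:ℝ) => ENNReal.ofReal ((r:ℝ) ^ (N-1))) *
          fun r : Ioi (0:ℝ) => (‖f ((r:ℝ) • (ω:Esp N))‖₊ : ℝ≥0∞)) r
          ∂((volume : Measure ℝ).comap Subtype.val)
        ≤ ∫⁻ r : Ioi (0:ℝ), Set.indicator {r : Ioi (0:ℝ) | (r:ℝ) < R} (fun _ => D) r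
          ∂((volume : Measure ℝ).comap Subtype.val) := lintegral_mono hptwise
      _ = D * ((volume : Measure ℝ).comap Subtype.val) {r : Ioi (0:ℝ) | (r:ℝ) < R} := by
          rw [show {r : Ioi (0:ℝ) | (r:ℝ) < R} = Subtype.val ⁻¹' (Iio R) from rfl,
            lintegral_indicator (measurable_subtype_coe measurableSet_Iio), setLIntegral_const]
      _ ≤ D * ENNReal.ofReal R := by
          refine mul_le_mul_right ?_ D
          rw [comap_subtype_coe_apply measurableSet_Ioi]
          have : (Subtype.val '' {r : Ioi (0:ℝ) | (r:ℝ) < R}) = Ioo 0 R := by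
            ext y
            simp only [Set.mem_image, Set.mem_setOf_eq, Set.mem_Ioo]
            constructor
            · rintro ⟨⟨z, hz⟩, hzR, rfl⟩; exact ⟨hz, hzR⟩
            · rintro ⟨hy0, hyR⟩; exact ⟨⟨y, hy0⟩, hyR, rfl⟩
          rw [this, Real.volume_Ioo, sub_zero]
  calc ∫⁻ ω : sphere (0:Esp N) 1, (∫⁻ r : Ioi (0:ℝ), ‖f ((r:ℝ) • (ω:Esp N))‖₊
        ∂(volumeIoiPow (N-1))) ∂(volume : Measure (Esp N)).toSphere
      ≤ ∫⁻ _ω : sphere (0:Esp N) 1, D * ENNReal.ofReal R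
        ∂(volume : Measure (Esp N)).toSphere := lintegral_mono inner_le
    _ = D * ENNReal.ofReal R * (volume : Measure (Esp N)).toSphere Set.univ :=
        lintegral_const _
    _ < ⊤ := by
        refine ENNReal.mul_lt_top (ENNReal.mul_lt_top ?_ ?_) ?_
        · exact ENNReal.ofReal_lt_top
        · exact ENNReal.ofReal_lt_top
        · exact measure_lt_top _ _
end DualHardyAux2

namespace DualHardyAux3
open Set Metric Filter MeasureTheory.Measure InnerProductSpace DualHardyAux DualHardyAux2

variable {N : ℕ}

lemma gradient_continuous {v : Esp N → ℝ} (hv : ContDiff ℝ (⊤:ℕ∞) v) :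
    Continuous (gradient v) :=
  (LinearIsometryEquiv.continuous _).comp (hv.continuous_fderiv (by simp))

lemma inner_gradient {v : Esp N → ℝ} (x y : Esp N) :
    (inner ℝ (gradient v x) y : ℝ) = fderiv ℝ v x y :=
  InnerProductSpace.toDual_symm_apply

lemma exists_radius {v : Esp N → ℝ} (hs : HasCompactSupport v) :
    ∃ R, 0 < R ∧ ∀ x : Esp N, R ≤ ‖x‖ → v x = 0 ∧ fderiv ℝ v x = 0 := by
  obtain ⟨R, hR0, hRv⟩ := hs.exists_pos_le_norm
  have hsupp : Function.support v ⊆ ball (0:Esp N) R := by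
    intro y hy
    by_contra h
    refine hy (hRv y ?_)
    simpa [mem_ball, dist_zero_right, not_lt] using h
  have hts : tsupport v ⊆ closedBall (0:Esp N) R :=
    closure_minimal (hsupp.trans ball_subset_closedBall) isClosed_closedBall
  refine ⟨R + 1, by linarith, fun x hx => ⟨hRv x (by linarith), ?_⟩⟩
  have hx' : x ∉ tsupport v := by
    intro hmem
    have := hts hmem
    rw [mem_closedBall, dist_zero_right] at this
    linarith
  by_contra h
  exact hx' (support_fderiv_subset (𝕜 := ℝ) h)

lemma gradient_eq_zero {v : Esp N → ℝ} {x : Esp N} (h : fderiv ℝ v x = 0) :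
    gradient v x = 0 := by
  show (toDual ℝ (Esp N)).symm (fderiv ℝ v x) = 0
  rw [h]
  simp

lemma bounded_of_cpt {φ : Esp N → ℝ} (hc : Continuous φ) (hs : HasCompactSupport φ) :
    ∃ B, 0 ≤ B ∧ ∀ x, |φ x| ≤ B := by
  obtain ⟨B, hB⟩ := hc.bounded_above_of_compact_support hs
  exact ⟨max B 0, le_max_right _ _, fun x =>
    (Real.norm_eq_abs (φ x) ▸ hB x).trans (le_max_left _ _)⟩

lemma integrable_rpow_mul (hN : 3 ≤ N) {ψ : Esp N → ℝ} (hψm : Measurable ψ)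
    {B R : ℝ} (hB : 0 ≤ B) (hR : 0 < R) (hψR : ∀ x : Esp N, R ≤ ‖x‖ → ψ x = 0)
    (hψb : ∀ x : Esp N, |ψ x| ≤ B) :
    Integrable (fun x : Esp N => ‖x‖ ^ (-2:ℝ) * ψ x) (volume : Measure (Esp N)) := by
  have hrw : (fun x : Esp N => ‖x‖ ^ (-2:ℝ)) = fun x : Esp N => (‖x‖^2)⁻¹ :=
    funext fun x => rpow_neg_two_eq (norm_nonneg x)
  have hmeas : Measurable fun x : Esp N => ‖x‖ ^ (-2:ℝ) * ψ x := by
    have h2 : (fun x : Esp N => ‖x‖ ^ (-2:ℝ) * ψ x) = fun x : Esp N => (‖x‖^2)⁻¹ * ψ x :=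
      funext fun x => by rw [rpow_neg_two_eq (norm_nonneg x)]
    rw [h2]
    exact ((measurable_norm.pow_const 2).inv).mul hψm
  refine integrable_master hN hmeas (C := B) hB hR (fun x hx => by rw [hψR x hx, mul_zero])
    fun x hx => ?_
  have h2 : (0:ℝ) ≤ ‖x‖ ^ (-2:ℝ) := Real.rpow_nonneg (norm_nonneg x) _
  rw [abs_mul, abs_of_nonneg h2, mul_comm]
  exact mul_le_mul_of_nonneg_right (hψb x) h2

theorem radial_ibp (hN : 3 ≤ N) {v : Esp N → ℝ} (hv : ContDiff ℝ (⊤:ℕ∞) v)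
    (hs : HasCompactSupport v) :
    ∫ x : Esp N, (‖x‖ ^ (-2:ℝ) * (inner ℝ x (gradient v x) : ℝ)
      + ((N:ℝ) - 2) * (‖x‖ ^ (-2:ℝ) * v x)) = 0 := by
  obtain ⟨M, rfl⟩ : ∃ M, N = M + 3 := ⟨N - 3, by omega⟩
  obtain ⟨R, hR0, hRv⟩ := exists_radius hs
  set g : Esp (M+3) → ℝ := fun x => ‖x‖ ^ (-2:ℝ) * (inner ℝ x (gradient v x) : ℝ)
      + (((M+3:ℕ):ℝ) - 2) * (‖x‖ ^ (-2:ℝ) * v x) with hg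
  -- integrability of both parts
  obtain ⟨B₀, hB₀0, hB₀⟩ := bounded_of_cpt hv.continuous hs
  obtain ⟨B₁, hB₁0, hB₁⟩ := bounded_of_cpt
    (continuous_id.inner (gradient_continuous hv))
    (by
      apply HasCompactSupport.intro (isCompact_closedBall (0:Esp (M+3)) R)
      intro x hx
      have hxR : R ≤ ‖x‖ := by
        rw [mem_closedBall, dist_zero_right, not_le] at hx
        exact hx.le
      rw [gradient_eq_zero (hRv x hxR).2, inner_zero_right])
  have hcross : Integrable (fun x : Esp (M+3) => ‖x‖ ^ (-2:ℝ) * (inner ℝ x (gradient v x) : ℝ))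
      (volume : Measure (Esp (M+3))) := by
    refine integrable_rpow_mul hN ?_ hB₁0 hR0 ?_ hB₁
    · exact (continuous_id.inner (gradient_continuous hv)).measurable
    · intro x hx
      rw [gradient_eq_zero (hRv x hx).2, inner_zero_right]
  have hpot : Integrable (fun x : Esp (M+3) => ‖x‖ ^ (-2:ℝ) * v x)
      (volume : Measure (Esp (M+3))) :=
    integrable_rpow_mul hN hv.continuous.measurable hB₀0 hR0 (fun x hx => (hRv x hx).1) hB₀
  have hint : Integrable g (volume : Measure (Esp (M+3))) := hcross.add (hpot.const_mul _)
  have h1 := transfer_integral (N := M+3) (by omega) g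
  have h2 := (transfer_integrable (N := M+3) (by omega) g).1 hint
  rw [hg] at h1 ⊢
  rw [h1, integral_prod _ h2]
  have hzero : ∀ ω : sphere (0:Esp (M+3)) 1,
      (∫ r : Ioi (0:ℝ), g ((r:ℝ) • (ω:Esp (M+3))) ∂(volumeIoiPow (M+3-1))) = 0 := by
    intro ω
    have hω : ‖(ω:Esp (M+3))‖ = 1 := mem_sphere_zero_iff_norm.1 ω.2
    rw [show (∫ r : Ioi (0:ℝ), g ((r:ℝ) • (ω:Esp (M+3))) ∂(volumeIoiPow (M+3-1)))
        = ∫ r in Ioi (0:ℝ), r ^ (M+3-1) * g (r • (ω:Esp (M+3))) from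
      volumeIoiPow_integral (M+3-1) (fun t : ℝ => g (t • (ω:Esp (M+3))))]
    set D : ℝ → ℝ := fun r => fderiv ℝ v (r • (ω:Esp (M+3))) (ω:Esp (M+3)) with hDdef
    set F : ℝ → ℝ := fun r => r^(M+1) * v (r • (ω:Esp (M+3))) with hF
    set F' : ℝ → ℝ := fun r => ((M+1:ℕ):ℝ) * r^M * v (r • (ω:Esp (M+3))) + r^(M+1) * D r
      with hF'
    have hd : ∀ r : ℝ, HasDerivAt (fun s : ℝ => v (s • (ω:Esp (M+3)))) (D r) r := by
      intro r
      have h1 : HasFDerivAt v (fderiv ℝ v (r • (ω:Esp (M+3)))) (r • (ω:Esp (M+3))) :=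
        (hv.differentiable (by simp) _).hasFDerivAt
      have h2 : HasDerivAt (fun s : ℝ => s • (ω:Esp (M+3))) (ω:Esp (M+3)) r := by
        simpa using (hasDerivAt_id r).smul_const (ω:Esp (M+3))
      simpa [hDdef, Function.comp_def] using h1.comp_hasDerivAt r h2
    have hder : ∀ r : ℝ, HasDerivAt F (F' r) r := by
      intro r
      have := (hasDerivAt_pow (M+1) r).mul (hd r)
      simpa [hF, hF', Pi.mul_def, show M+1-1 = M from rfl] using this
    have hF'c : Continuous F' := by
      have hDc : Continuous D :=
        ((hv.continuous_fderiv (by simp)).comp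
          (continuous_id.smul continuous_const)).clm_apply continuous_const
      exact ((continuous_const.mul (continuous_pow _)).mul
        (hv.continuous.comp (continuous_id.smul continuous_const))).add
        ((continuous_pow _).mul hDc)
    have hcs : HasCompactSupport F' := by
      apply HasCompactSupport.intro (isCompact_Icc (a := -R) (b := R))
      intro r hr
      have hrR : R ≤ |r| := by
        rw [mem_Icc, not_and_or, not_le, not_le] at hr
        rcases hr with h | h
        · rw [abs_of_neg (by linarith)]; linarith
        · rw [abs_of_pos (by linarith)]; linarith
      have hn : R ≤ ‖r • (ω:Esp (M+3))‖ := by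
        rw [norm_smul, hω, mul_one, Real.norm_eq_abs]; exact hrR
      simp [hF', hDdef, (hRv _ hn).1, (hRv _ hn).2]
    have hFi : IntegrableOn F' (Ioi (0:ℝ)) :=
      (hF'c.integrable_of_hasCompactSupport hcs).integrableOn
    have htend : Tendsto F atTop (nhds 0) := by
      refine Tendsto.congr' ?_ tendsto_const_nhds
      filter_upwards [eventually_ge_atTop R] with r hr
      have hn : R ≤ ‖r • (ω:Esp (M+3))‖ := by
        rw [norm_smul, hω, mul_one, Real.norm_eq_abs, abs_of_nonneg (le_trans hR0.le hr)]
        exact hr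
      rw [hF]
      simp [(hRv _ hn).1]
    have hFcont : Continuous F :=
      (continuous_pow _).mul (hv.continuous.comp (continuous_id.smul continuous_const))
    have hibp := integral_Ioi_of_hasDerivAt_of_tendsto (a := 0)
      hFcont.continuousWithinAt (fun x _ => hder x) hFi htend
    have hptwise : ∀ r ∈ Ioi (0:ℝ), (r:ℝ)^(M+3-1) * g ((r:ℝ) • (ω:Esp (M+3))) = F' r := by
      intro r hr
      have hr0 : (0:ℝ) < r := hr
      have hnorm : ‖r • (ω:Esp (M+3))‖ = r := by
        rw [norm_smul, hω, mul_one, Real.norm_eq_abs, abs_of_pos hr0]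
      have hinner : (inner ℝ (r • (ω:Esp (M+3))) (gradient v (r • (ω:Esp (M+3)))) : ℝ)
          = r * D r := by
        rw [real_inner_smul_left, real_inner_comm, inner_gradient, hDdef]
      show r ^ (M+3-1) * (‖r • (ω:Esp (M+3))‖ ^ (-2:ℝ) *
          (inner ℝ (r • (ω:Esp (M+3))) (gradient v (r • (ω:Esp (M+3)))) : ℝ)
          + (((M+3:ℕ):ℝ) - 2) * (‖r • (ω:Esp (M+3))‖ ^ (-2:ℝ) * v (r • (ω:Esp (M+3))))) = F' r
      rw [hnorm, hinner, rpow_neg_two_eq hr0.le]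
      simp only [hF', show M+3-1 = M+2 from rfl]
      push_cast
      field_simp
      ring
    rw [setIntegral_congr_fun measurableSet_Ioi hptwise, hibp, hF]
    simp
  rw [integral_congr_ae (ae_of_all _ hzero), integral_zero]

end DualHardyAux3
open DualHardyAux DualHardyAux2 DualHardyAux3 in
/-- For `N ≥ 3`, `μ_0 = -(N-2)²/4`, `μ > (3/4)μ_0` and `τ_+ = -(N-2)/2 + √(μ-μ_0)`,
the quadratic form of the dual Leray–Hardy operator
`𝓛*_μ u = -Δu - 2τ_+ |x|^{-2} x·∇u` is coercive on `C_c^∞(ℝ^N)`: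
`∫ (|∇u|² - 2τ_+ ‖x‖^{-2} (x·∇u) u) ≥ min{1, 1 + 4τ_+/(N-2)} ∫ |∇u|²`,
and the constant `min{1, 1 + 4τ_+/(N-2)}` is strictly positive. -/
theorem dual_hardy_quadratic_form_coercive (N : ℕ) (hN : 3 ≤ N) (μ₀ μ τ : ℝ)
    (hμ₀ : μ₀ = -(((N : ℝ) - 2) ^ 2) / 4)
    (hμ : 3 / 4 * μ₀ < μ)
    (hτ : τ = -((N : ℝ) - 2) / 2 + Real.sqrt (μ - μ₀))
    (u : EuclideanSpace ℝ (Fin N) → ℝ)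
    (hu : ContDiff ℝ (⊤ : ℕ∞) u) (hsupp : HasCompactSupport u) :
    ((∫ x, (‖gradient u x‖ ^ 2 -
        2 * τ * ‖x‖ ^ (-2 : ℝ) * (inner ℝ x (gradient u x) : ℝ) * u x)) ≥
      min 1 (1 + 4 * τ / ((N : ℝ) - 2)) * ∫ x, ‖gradient u x‖ ^ 2) ∧
    0 < min 1 (1 + 4 * τ / ((N : ℝ) - 2)) := by
  subst hμ₀ hτ
  have hd : (0:ℝ) < (N:ℝ) - 2 := by
    have h3 : (3:ℝ) ≤ (N:ℝ) := by exact_mod_cast hN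
    linarith
  -- τ > -(N-2)/4
  have hτ' : -(((N:ℝ)-2)/4) < -((N : ℝ) - 2) / 2 + Real.sqrt (μ - -(((N : ℝ) - 2) ^ 2) / 4) := by
    have h16 : (((N:ℝ)-2)/4)^2 < μ - -(((N : ℝ) - 2) ^ 2) / 4 := by nlinarith
    have := (Real.lt_sqrt (by positivity : (0:ℝ) ≤ ((N:ℝ)-2)/4)).2 h16
    linarith
  set τ := -((N : ℝ) - 2) / 2 + Real.sqrt (μ - -(((N : ℝ) - 2) ^ 2) / 4) with hτdef
  clear_value τ
  have hc1 : 0 < 1 + 4*τ/((N:ℝ)-2) := by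
    have : -1 < 4*τ/((N:ℝ)-2) := by rw [lt_div_iff₀ hd]; nlinarith
    linarith
  refine ⟨?_, lt_min one_pos hc1⟩
  -- basic objects
  have hgradc : Continuous (gradient u) := gradient_continuous hu
  obtain ⟨R, hR0, hRv⟩ := exists_radius hsupp
  have hgs : HasCompactSupport (gradient u) := by
    apply HasCompactSupport.intro (isCompact_closedBall (0 : EuclideanSpace ℝ (Fin N)) R)
    intro x hx
    have hxR : R ≤ ‖x‖ := by
      rw [Metric.mem_closedBall, dist_zero_right, not_le] at hx
      exact hx.le
    exact gradient_eq_zero (hRv x hxR).2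
  obtain ⟨Bu, hBu0, hBu⟩ := bounded_of_cpt hu.continuous hsupp
  obtain ⟨Bg, hBg0, hBg⟩ := bounded_of_cpt hgradc.norm hgs.norm
  -- integrability
  have hKi : Integrable (fun x : EuclideanSpace ℝ (Fin N) => ‖gradient u x‖^2)
      (volume : Measure (EuclideanSpace ℝ (Fin N))) := by
    refine Continuous.integrable_of_hasCompactSupport (hgradc.norm.pow 2) ?_
    exact hgs.comp_left (g := fun y : EuclideanSpace ℝ (Fin N) => ‖y‖^2) (by simp)
  have hXi : Integrable (fun x : EuclideanSpace ℝ (Fin N) =>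
      ‖x‖ ^ (-2:ℝ) * ((inner ℝ x (gradient u x) : ℝ) * u x))
      (volume : Measure (EuclideanSpace ℝ (Fin N))) := by
    refine integrable_rpow_mul hN
      (((continuous_id.inner hgradc).mul hu.continuous).measurable)
      (B := R * Bg * Bu) (by positivity) hR0 ?_ ?_
    · intro x hx
      rw [gradient_eq_zero (hRv x hx).2, inner_zero_right, zero_mul]
    · intro x
      rcases le_or_gt R ‖x‖ with h | h
      · rw [gradient_eq_zero (hRv x h).2, inner_zero_right, zero_mul, abs_zero]
        positivity
      · rw [abs_mul]
        refine mul_le_mul ?_ (hBu x) (abs_nonneg _) (by positivity)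
        refine (abs_real_inner_le_norm _ _).trans ?_
        have h1 := hBg x
        rw [abs_norm] at h1
        exact mul_le_mul h.le h1 (norm_nonneg _) hR0.le
  have hJi : Integrable (fun x : EuclideanSpace ℝ (Fin N) => ‖x‖ ^ (-2:ℝ) * (u x * u x))
      (volume : Measure (EuclideanSpace ℝ (Fin N))) := by
    refine integrable_rpow_mul hN ((hu.continuous.mul hu.continuous).measurable)
      (B := Bu * Bu) (by positivity) hR0 ?_ ?_
    · intro x hx; rw [(hRv x hx).1, zero_mul]
    · intro x
      rw [abs_mul]
      exact mul_le_mul (hBu x) (hBu x) (abs_nonneg _) hBu0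
  set K := ∫ x : EuclideanSpace ℝ (Fin N), ‖gradient u x‖^2 with hKdef
  set X := ∫ x : EuclideanSpace ℝ (Fin N),
    ‖x‖ ^ (-2:ℝ) * ((inner ℝ x (gradient u x) : ℝ) * u x) with hXdef
  set J := ∫ x : EuclideanSpace ℝ (Fin N), ‖x‖ ^ (-2:ℝ) * (u x * u x) with hJdef
  clear_value K X J
  have hK0 : 0 ≤ K := by
    rw [hKdef]; exact integral_nonneg fun x => sq_nonneg _
  have hJ0 : 0 ≤ J := by
    rw [hJdef]
    exact integral_nonneg fun x =>
      mul_nonneg (Real.rpow_nonneg (norm_nonneg _) _) (mul_self_nonneg _)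
  -- integration by parts identity : 2X + (N-2)J = 0
  have hibp := radial_ibp hN (hu.mul hu)
    (hsupp.mul_right : HasCompactSupport fun x => u x * u x)
  have hpt : ∀ x : EuclideanSpace ℝ (Fin N),
      ‖x‖ ^ (-2:ℝ) * (inner ℝ x (gradient (fun y => u y * u y) x) : ℝ)
        + ((N:ℝ) - 2) * (‖x‖ ^ (-2:ℝ) * ((fun y => u y * u y) x))
      = 2 * (‖x‖ ^ (-2:ℝ) * ((inner ℝ x (gradient u x) : ℝ) * u x))
        + ((N:ℝ) - 2) * (‖x‖ ^ (-2:ℝ) * (u x * u x)) := by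
    intro x
    have hdx : DifferentiableAt ℝ u x := hu.differentiable (by simp) x
    have h1 : (inner ℝ x (gradient (fun y => u y * u y) x) : ℝ)
        = 2 * ((inner ℝ x (gradient u x) : ℝ) * u x) := by
      rw [real_inner_comm, inner_gradient, fderiv_fun_mul hdx hdx]
      have h2 : (inner ℝ x (gradient u x) : ℝ) = fderiv ℝ u x x := by
        rw [real_inner_comm, inner_gradient]
      rw [h2]
      simp only [ContinuousLinearMap.add_apply, ContinuousLinearMap.coe_smul',
        Pi.smul_apply, smul_eq_mul]
      ring
    rw [h1]
    ring
  have hibp2 : ∫ x : EuclideanSpace ℝ (Fin N),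
      (2 * (‖x‖ ^ (-2:ℝ) * ((inner ℝ x (gradient u x) : ℝ) * u x))
        + ((N:ℝ) - 2) * (‖x‖ ^ (-2:ℝ) * (u x * u x))) = 0 := by
    rw [← integral_congr_ae (ae_of_all _ hpt)]
    exact hibp
  rw [integral_add (hXi.const_mul 2) (hJi.const_mul _), integral_const_mul _ _,
    integral_const_mul _ _] at hibp2
  rw [← hXdef, ← hJdef] at hibp2
  have hXval : X = -(((N:ℝ)-2) * J) / 2 := by linarith
  -- Hardy inequality via the λ-trick
  have hHpt : ∀ x : EuclideanSpace ℝ (Fin N),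
      ‖gradient u x + ((((N:ℝ)-2)/2) * (‖x‖ ^ (-2:ℝ) * u x)) • x‖^2
      = ‖gradient u x‖^2 + (((N:ℝ)-2) * (‖x‖ ^ (-2:ℝ) * ((inner ℝ x (gradient u x) : ℝ) * u x))
        + (((N:ℝ)-2)/2)^2 * (‖x‖ ^ (-2:ℝ) * (u x * u x))) := by
    intro x
    rw [norm_add_sq_real, real_inner_smul_right, norm_smul]
    rcases eq_or_ne x (0 : EuclideanSpace ℝ (Fin N)) with rfl | hx
    · simp [Real.zero_rpow (by norm_num : (-2:ℝ) ≠ 0)]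
    · have hn0 : ‖x‖ ≠ 0 := norm_ne_zero_iff.2 hx
      rw [rpow_neg_two_eq (norm_nonneg x), real_inner_comm (gradient u x) x,
        Real.norm_eq_abs, mul_pow, sq_abs]
      field_simp
      ring
  have hHardy : 0 ≤ K - (((N:ℝ)-2)/2)^2 * J := by
    have h0 : 0 ≤ ∫ x : EuclideanSpace ℝ (Fin N),
        ‖gradient u x + ((((N:ℝ)-2)/2) * (‖x‖ ^ (-2:ℝ) * u x)) • x‖^2 :=
      integral_nonneg fun x => sq_nonneg _
    have hGi : Integrable (fun x : EuclideanSpace ℝ (Fin N) =>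
        ((N:ℝ)-2) * (‖x‖ ^ (-2:ℝ) * ((inner ℝ x (gradient u x) : ℝ) * u x))
        + (((N:ℝ)-2)/2)^2 * (‖x‖ ^ (-2:ℝ) * (u x * u x)))
        (volume : Measure (EuclideanSpace ℝ (Fin N))) :=
      (hXi.const_mul _).add (hJi.const_mul _)
    rw [integral_congr_ae (ae_of_all _ hHpt), integral_add hKi hGi,
      integral_add (hXi.const_mul _) (hJi.const_mul _),
      integral_const_mul _ _, integral_const_mul _ _] at h0
    rw [← hKdef, ← hXdef, ← hJdef, hXval] at h0
    have heq : K - (((N:ℝ)-2)/2)^2 * J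
        = K + (((N:ℝ)-2) * (-(((N:ℝ)-2) * J) / 2) + (((N:ℝ)-2)/2)^2 * J) := by ring
    rw [heq]
    exact h0
  -- rewrite the goal integral
  have hpt2 : ∀ x : EuclideanSpace ℝ (Fin N),
      ‖gradient u x‖ ^ 2 - 2 * τ * ‖x‖ ^ (-2 : ℝ) * (inner ℝ x (gradient u x) : ℝ) * u x
      = ‖gradient u x‖^2
        - (2*τ) * (‖x‖ ^ (-2:ℝ) * ((inner ℝ x (gradient u x) : ℝ) * u x)) := fun x => by ring
  rw [ge_iff_le, integral_congr_ae (ae_of_all _ hpt2),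
    integral_sub hKi (hXi.const_mul _), integral_const_mul _ _, ← hKdef, ← hXdef]
  -- final arithmetic
  clear hibp hibp2 hpt hpt2 hHpt hXi hJi hKi hgs hgradc hRv hBu hBg hu hsupp
    hτdef hμ hKdef hXdef hJdef
  rcases le_or_gt 0 τ with hτ0 | hτ0
  · have h2 : min 1 (1 + 4*τ/((N:ℝ)-2)) * K ≤ 1 * K :=
      mul_le_mul_of_nonneg_right (min_le_left _ _) hK0
    have h3 : 0 ≤ τ * (((N:ℝ)-2) * J) := mul_nonneg hτ0 (mul_nonneg hd.le hJ0)
    have h4 : K - (2*τ)*X = K + τ*(((N:ℝ)-2)*J) := by rw [hXval]; ring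
    linarith
  · have h2 : min 1 (1 + 4*τ/((N:ℝ)-2)) * K ≤ (1 + 4*τ/((N:ℝ)-2)) * K :=
      mul_le_mul_of_nonneg_right (min_le_right _ _) hK0
    have h4 : K - (2*τ)*X = K + τ*(((N:ℝ)-2)*J) := by rw [hXval]; ring
    have hH4 : (((N:ℝ)-2))^2 * J ≤ 4 * K := by nlinarith
    have h5 : (4*τ/((N:ℝ)-2)) * K ≤ τ * (((N:ℝ)-2)*J) := by
      rw [div_mul_eq_mul_div, div_le_iff₀ hd]
      nlinarith [mul_nonneg (neg_nonneg.2 hτ0.le) (sub_nonneg.2 hH4), hd, hH4]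
    have h6 : (1 + 4*τ/((N:ℝ)-2)) * K ≤ K + τ*(((N:ℝ)-2)*J) := by
      have : (1 + 4*τ/((N:ℝ)-2)) * K = K + (4*τ/((N:ℝ)-2)) * K := by ring
      linarith [h5, this.le, this.ge]
    linarith
end
end
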